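/- arXiv:2408.05723 — 2 statements merged into one kernel-verified Lean document; each statement's English description precedes it below -/
import Mathlib

section
/- Let v₁, …, v_N ∈ ℂ^d, c > 0, and s > 0. Consider the class H of functions on {v₁, …, v_N} of the form h(v) = Re(w^H · D_λ · v) where w ∈ ℂ^d with ‖w‖₂ ≤ c and D_λ = diag(exp(sλ₁), …, exp(sλ_d)) with λ ∈ ℝ^d, |λⱼ| ≤ c for all j. Then the empirical Rademacher complexity satisfies R_S(H) = (1/N)·E_σ[ sup_{h∈H} Σ_{i=1}^N σᵢ h(vᵢ) ] = (c/N)·exp(cs)·E_σ[ ‖Σ_{i=1}^N σᵢ vᵢ‖₂ ], where σ₁, …, σ_N are i.i.d. Rademacher random variables. -/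
open scoped ComplexConjugate

/-- The sign `±1` associated with a Boolean (a Rademacher value). -/
noncomputable def rsign (b : Bool) : ℝ := if b then 1 else -1

/-- Empirical Rademacher complexity of a class `H` of real-valued functions on a sample
`v₁, …, v_N`: `R_S(H) = (1/N) E_σ [sup_{h ∈ H} ∑ i, σᵢ h(vᵢ)]`, where the expectation is
over i.i.d. uniform signs `σᵢ ∈ {±1}`. -/
noncomputable def radComplexity {X : Type*} (N : ℕ) (H : Set (X → ℝ)) (v : Fin N → X) : ℝ :=
  (∑ b : Fin N → Bool, sSup ((fun h : X → ℝ => ∑ i, rsign (b i) * h (v i)) '' H)) / 2 ^ N / N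

/-- The class of functions `v ↦ Re(wᴴ D_λ v)` with `‖w‖₂ ≤ c` and
`D_λ = diag(exp(sλ₁), …, exp(sλ_d))`, `|λⱼ| ≤ c`. -/
noncomputable def Hclass (d : ℕ) (c s : ℝ) : Set (EuclideanSpace ℂ (Fin d) → ℝ) :=
  { h | ∃ w : EuclideanSpace ℂ (Fin d), ‖w‖ ≤ c ∧ ∃ lam : Fin d → ℝ,
      (∀ j, |lam j| ≤ c) ∧
      h = fun v => (∑ j, conj (w j) * (Real.exp (s * lam j) : ℂ) * v j).re }

/-- Upper bound: any member value is at most `c exp(cs) ‖u‖`. -/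
lemma rad_upper (d : ℕ) (c s : ℝ) (hs : 0 < s) (u w : EuclideanSpace ℂ (Fin d))
    (hw : ‖w‖ ≤ c) (lam : Fin d → ℝ) (hlam : ∀ j, |lam j| ≤ c) :
    (∑ j, conj (w j) * (Real.exp (s * lam j) : ℂ) * u j).re ≤ c * Real.exp (c * s) * ‖u‖ := by
  set w' : EuclideanSpace ℂ (Fin d) := WithLp.toLp 2 (fun j => (Real.exp (s * lam j) : ℂ) * w j) with hw'
  have hinner : (inner ℂ w' u : ℂ) = ∑ j, conj (w j) * (Real.exp (s * lam j) : ℂ) * u j := by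
    simp only [PiLp.inner_apply, RCLike.inner_apply, hw', PiLp.toLp_apply, map_mul, Complex.conj_ofReal]
    exact Finset.sum_congr rfl (fun j _ => by ring)
  have h1 : (∑ j, conj (w j) * (Real.exp (s * lam j) : ℂ) * u j).re ≤ ‖(inner ℂ w' u : ℂ)‖ := by
    rw [hinner]; exact Complex.re_le_norm _
  have h2 : ‖(inner ℂ w' u : ℂ)‖ ≤ ‖w'‖ * ‖u‖ := norm_inner_le_norm _ _
  have h3 : ‖w'‖ ≤ Real.exp (c * s) * ‖w‖ := by
    rw [EuclideanSpace.norm_eq, EuclideanSpace.norm_eq]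
    rw [← Real.sqrt_sq (by positivity : (0:ℝ) ≤ Real.exp (c*s)), ← Real.sqrt_mul (by positivity)]
    apply Real.sqrt_le_sqrt
    rw [Finset.mul_sum]
    apply Finset.sum_le_sum
    intro j _
    have hnj : ‖w' j‖ = Real.exp (s * lam j) * ‖w j‖ := by
      simp only [hw', PiLp.toLp_apply]
      rw [norm_mul, Complex.norm_real, Real.norm_eq_abs, abs_of_pos (Real.exp_pos _)]
    have hle : Real.exp (s * lam j) ≤ Real.exp (c * s) :=
      Real.exp_le_exp.2 (by nlinarith [(abs_le.1 (hlam j)).2])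
    rw [hnj, mul_pow]
    exact mul_le_mul_of_nonneg_right
      (pow_le_pow_left₀ (Real.exp_pos _).le hle 2) (by positivity)
  calc (∑ j, conj (w j) * (Real.exp (s * lam j) : ℂ) * u j).re
      ≤ ‖w'‖ * ‖u‖ := h1.trans h2
    _ ≤ (Real.exp (c*s) * ‖w‖) * ‖u‖ := by gcongr
    _ ≤ (Real.exp (c*s) * c) * ‖u‖ := by gcongr
    _ = c * Real.exp (c*s) * ‖u‖ := by ring

/-- The bound `c exp(cs) ‖u‖` is achieved. -/
lemma rad_achieve (d : ℕ) (c s : ℝ) (hc : 0 < c) (u : EuclideanSpace ℂ (Fin d)) :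
    ∃ w : EuclideanSpace ℂ (Fin d), ‖w‖ ≤ c ∧
      (∑ j, conj (w j) * (Real.exp (s * c) : ℂ) * u j).re = c * Real.exp (c * s) * ‖u‖ := by
  rcases eq_or_ne u 0 with rfl | hu
  · exact ⟨0, by simpa using hc.le, by simp⟩
  · have hun : (0:ℝ) < ‖u‖ := norm_pos_iff.2 hu
    refine ⟨(c / ‖u‖) • u, ?_, ?_⟩
    · rw [norm_smul, Real.norm_eq_abs, abs_of_pos (div_pos hc hun), div_mul_cancel₀]
      exact hun.ne'
    · have h2 : (∑ j, conj (((c / ‖u‖) • u) j) * (Real.exp (s * c) : ℂ) * u j)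
          = ((c/‖u‖ : ℝ):ℂ) * (Real.exp (s*c):ℂ) * (inner ℂ u u : ℂ) := by
        simp only [PiLp.smul_apply, Complex.real_smul, map_mul, Complex.conj_ofReal,
          PiLp.inner_apply, RCLike.inner_apply, Finset.mul_sum]
        exact Finset.sum_congr rfl fun j _ => by ring
      have h3 : (inner ℂ u u : ℂ).re = ‖u‖^2 := by
        rw [← RCLike.re_to_complex]; exact inner_self_eq_norm_sq u
      have h4 : (inner ℂ u u : ℂ).im = 0 := by
        rw [← RCLike.im_to_complex]; exact inner_self_im u
      rw [h2, Complex.mul_re, Complex.mul_re, h3, h4]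
      simp only [Complex.ofReal_re, Complex.ofReal_im]
      rw [mul_comm s c]
      field_simp
      ring

/-- Exchanging the sum over the sample with the real part. -/
lemma rad_swap (d N : ℕ) (v : Fin N → EuclideanSpace ℂ (Fin d)) (b : Fin N → Bool)
    (w : EuclideanSpace ℂ (Fin d)) (e : Fin d → ℝ) :
    ∑ i, rsign (b i) * (∑ j, conj (w j) * (e j : ℂ) * (v i) j).re
      = (∑ j, conj (w j) * (e j : ℂ) * (∑ i, rsign (b i) • v i) j).re := by
  have happ : ∀ j, (∑ i, rsign (b i) • v i) j = ∑ i, ((rsign (b i) : ℂ)) * v i j := by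
    intro j
    rw [WithLp.ofLp_sum, Finset.sum_apply]
    exact Finset.sum_congr rfl fun i _ => by simp [Complex.real_smul]
  simp only [happ, Complex.re_sum, Finset.mul_sum]
  rw [Finset.sum_comm]
  refine Finset.sum_congr rfl fun j _ => Finset.sum_congr rfl fun i _ => ?_
  rw [show (starRingEnd ℂ) (w j) * (e j:ℂ) * ((rsign (b i):ℂ) * v i j)
      = (rsign (b i):ℂ) * ((starRingEnd ℂ) (w j) * (e j:ℂ) * v i j) by ring,
    Complex.re_ofReal_mul]

/-- Closed form of the empirical Rademacher complexity of the class `Hclass`: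
`R_S(H) = (c/N) exp(cs) E_σ[‖∑ i, σᵢ vᵢ‖₂]`. -/
theorem radComplexity_Hclass_eq (d N : ℕ) (hN : 0 < N)
    (v : Fin N → EuclideanSpace ℂ (Fin d)) (c s : ℝ) (hc : 0 < c) (hs : 0 < s) :
    radComplexity N (Hclass d c s) v
      = c / N * Real.exp (c * s) *
          ((∑ b : Fin N → Bool, ‖∑ i, rsign (b i) • v i‖) / 2 ^ N) := by
  have key : ∀ b : Fin N → Bool,
      sSup ((fun h : EuclideanSpace ℂ (Fin d) → ℝ => ∑ i, rsign (b i) * h (v i)) '' Hclass d c s)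
        = c * Real.exp (c * s) * ‖∑ i, rsign (b i) • v i‖ := by
    intro b
    set u : EuclideanSpace ℂ (Fin d) := ∑ i, rsign (b i) • v i with hu
    have hub : ∀ r ∈ (fun h : EuclideanSpace ℂ (Fin d) → ℝ =>
        ∑ i, rsign (b i) * h (v i)) '' Hclass d c s, r ≤ c * Real.exp (c * s) * ‖u‖ := by
      rintro r ⟨h, ⟨w, hw, lam, hlam, rfl⟩, rfl⟩
      have := rad_swap d N v b w (fun j => Real.exp (s * lam j))
      simp only at this ⊢
      rw [this]
      exact rad_upper d c s hs u w hw lam hlam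
    obtain ⟨w₀, hw₀, hval₀⟩ := rad_achieve d c s hc u
    have hmem : (fun x : EuclideanSpace ℂ (Fin d) =>
        (∑ j, conj (w₀ j) * (Real.exp (s * c) : ℂ) * x j).re) ∈ Hclass d c s :=
      ⟨w₀, hw₀, fun _ => c, fun _ => by rw [abs_of_pos hc], rfl⟩
    have himg : c * Real.exp (c * s) * ‖u‖ ∈
        (fun h : EuclideanSpace ℂ (Fin d) → ℝ => ∑ i, rsign (b i) * h (v i)) '' Hclass d c s := by
      refine ⟨_, hmem, ?_⟩
      have := rad_swap d N v b w₀ (fun _ => Real.exp (s * c))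
      simp only at this ⊢
      rw [this]
      exact hval₀
    exact le_antisymm (csSup_le ⟨_, himg⟩ hub) (le_csSup ⟨_, hub⟩ himg)
  unfold radComplexity
  rw [Finset.sum_congr rfl (fun b _ => key b), ← Finset.mul_sum]
  ring
end

section
/- Let x₁, …, x_N ∈ ℂ^d, c > 0, T > 0, γ > 0, and 0 < p < 1. Define the function classes F̂ = { v ↦ Re(w^H D_λ v) : ‖w‖₂ ≤ c, λ ∈ ℝ^d with |λⱼ| ≤ c } and Ĝ = { v ↦ exp(−p(1−p)γ²T/2) · Re(w^H D_λ v) : ‖w‖₂ ≤ c, λ ∈ ℝ^d with |λⱼ| ≤ c }, where D_λ = diag(exp(Tpλ₁), …, exp(Tpλ_d)). Then the empirical Rademacher complexities over the sample S = {x₁, …, x_N} satisfy R_S(F̂) = (c/N)·exp(cTp)·E_σ[‖Σᵢ σᵢ xᵢ‖₂], R_S(Ĝ) = exp(−p(1−p)γ²T/2)·R_S(F̂), and consequently R_S(Ĝ) < R_S(F̂) whenever E_σ[‖Σᵢ σᵢ xᵢ‖₂] > 0. -/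
open scoped ComplexConjugate

/-- The class `F̂` of functions `v ↦ Re(wᴴ D_λ v)` with `‖w‖₂ ≤ c`,
`D_λ = diag(exp(Tpλ₁), …, exp(Tpλ_d))`, `|λⱼ| ≤ c` (deterministic ODE model). -/
noncomputable def Fhat (d : ℕ) (c T p : ℝ) : Set (EuclideanSpace ℂ (Fin d) → ℝ) :=
  { h | ∃ w : EuclideanSpace ℂ (Fin d), ‖w‖ ≤ c ∧ ∃ lam : Fin d → ℝ,
      (∀ j, |lam j| ≤ c) ∧
      h = fun v => (∑ j, conj (w j) * (Real.exp (T * p * lam j) : ℂ) * v j).re }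

/-- The class `Ĝ` obtained from `F̂` by the multiplicative damping factor
`exp(−p(1−p)γ²T/2)` coming from the stochastic (SDE) model. -/
noncomputable def Ghat (d : ℕ) (c T p γ : ℝ) : Set (EuclideanSpace ℂ (Fin d) → ℝ) :=
  { h | ∃ w : EuclideanSpace ℂ (Fin d), ‖w‖ ≤ c ∧ ∃ lam : Fin d → ℝ,
      (∀ j, |lam j| ≤ c) ∧
      h = fun v => Real.exp (-(p * (1 - p) * γ ^ 2 * T / 2)) *
        (∑ j, conj (w j) * (Real.exp (T * p * lam j) : ℂ) * v j).re }

private lemma coord_sum {d N : ℕ} (x : Fin N → EuclideanSpace ℂ (Fin d)) (s : Fin N → ℝ)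
    (j : Fin d) : (∑ i, s i • x i) j = ∑ i, (s i : ℂ) * x i j := by
  induction (Finset.univ : Finset (Fin N)) using Finset.induction with
  | empty => simp
  | insert _ _ h ih => simp [Finset.sum_insert h, ih, Complex.real_smul]

private noncomputable def Dvec {d : ℕ} (E : Fin d → ℝ) (w : EuclideanSpace ℂ (Fin d)) :
    EuclideanSpace ℂ (Fin d) := WithLp.toLp 2 (fun j => (E j : ℂ) * w j)

private lemma sum_eval {d N : ℕ} (x : Fin N → EuclideanSpace ℂ (Fin d)) (s : Fin N → ℝ)
    (w : EuclideanSpace ℂ (Fin d)) (E : Fin d → ℝ) :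
    ∑ i, s i * (∑ j, conj (w j) * (E j : ℂ) * x i j).re
      = (inner ℂ (Dvec E w) (∑ i, s i • x i)).re := by
  have h1 : (inner ℂ (Dvec E w) (∑ i, s i • x i))
      = ∑ i, (s i : ℂ) * ∑ j, conj (w j) * (E j : ℂ) * x i j := by
    rw [PiLp.inner_apply]
    simp only [RCLike.inner_apply', coord_sum x s, Finset.mul_sum, Dvec, PiLp.toLp_apply, map_mul,
      Complex.conj_ofReal]
    rw [Finset.sum_comm]
    exact Finset.sum_congr rfl fun i _ => Finset.sum_congr rfl fun j _ => by ring
  rw [h1, Complex.re_sum]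
  exact Finset.sum_congr rfl fun i _ => by rw [Complex.re_ofReal_mul]

private lemma Dvec_norm_le {d : ℕ} {E : Fin d → ℝ} {M : ℝ} (hM : 0 ≤ M)
    (hE : ∀ j, |E j| ≤ M) (w : EuclideanSpace ℂ (Fin d)) : ‖Dvec E w‖ ≤ M * ‖w‖ := by
  rw [EuclideanSpace.norm_eq, EuclideanSpace.norm_eq,
    show M * Real.sqrt (∑ j, ‖w j‖ ^ 2) = Real.sqrt (M ^ 2 * ∑ j, ‖w j‖ ^ 2) by
      rw [Real.sqrt_mul (sq_nonneg M), Real.sqrt_sq hM]]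
  apply Real.sqrt_le_sqrt
  rw [Finset.mul_sum]
  refine Finset.sum_le_sum fun j _ => ?_
  have h1 : ‖Dvec E w j‖ = |E j| * ‖w j‖ := by
    simp [Dvec, PiLp.toLp_apply, Real.norm_eq_abs]
  rw [h1, mul_pow]
  have h2 : |E j| ^ 2 ≤ M ^ 2 := by nlinarith [abs_nonneg (E j), hE j]
  exact mul_le_mul_of_nonneg_right h2 (sq_nonneg _)

private lemma fhat_isGreatest {d N : ℕ} (x : Fin N → EuclideanSpace ℂ (Fin d)) {c T p : ℝ}
    (hc : 0 < c) (hTp : 0 ≤ T * p) (s : Fin N → ℝ) :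
    IsGreatest ((fun h : EuclideanSpace ℂ (Fin d) → ℝ => ∑ i, s i * h (x i)) '' Fhat d c T p)
      (c * Real.exp (T * p * c) * ‖∑ i, s i • x i‖) := by
  set u := ∑ i, s i • x i with hu_def
  constructor
  · -- membership
    by_cases hu : u = 0
    · refine ⟨_, ⟨0, by simpa using hc.le, fun _ => c, fun j => le_of_eq (abs_of_pos hc),
        rfl⟩, ?_⟩
      simp [hu]
    · have hnu : (0 : ℝ) < ‖u‖ := norm_pos_iff.mpr hu
      refine ⟨_, ⟨(c / ‖u‖) • u, ?_, fun _ => c, fun j => le_of_eq (abs_of_pos hc), rfl⟩, ?_⟩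
      · rw [norm_smul, Real.norm_eq_abs, abs_of_pos (by positivity)]
        rw [div_mul_cancel₀ _ hnu.ne']
      · beta_reduce
        rw [sum_eval x s ((c / ‖u‖) • u) (fun _ => Real.exp (T * p * c))]
        have hD : Dvec (fun _ => Real.exp (T * p * c)) ((c / ‖u‖) • u)
            = ((Real.exp (T * p * c) * (c / ‖u‖) : ℝ) : ℂ) • u := by
          ext j
          simp only [Dvec, PiLp.toLp_apply, PiLp.smul_apply, Complex.real_smul, Complex.ofReal_mul,
            smul_eq_mul]
          ring
        rw [← hu_def, hD, inner_smul_left, Complex.conj_ofReal]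
        have h3 : inner ℂ u u = (‖u‖ : ℂ) ^ 2 := inner_self_eq_norm_sq_to_K u
        rw [h3, ← Complex.ofReal_pow, ← Complex.ofReal_mul, Complex.ofReal_re]
        field_simp
  · -- upper bound
    rintro y ⟨h, ⟨w, hw, lam, hlam, rfl⟩, rfl⟩
    beta_reduce
    rw [sum_eval x s w (fun j => Real.exp (T * p * lam j))]
    have hE : ∀ j, |Real.exp (T * p * lam j)| ≤ Real.exp (T * p * c) := by
      intro j
      rw [abs_of_pos (Real.exp_pos _)]
      exact Real.exp_le_exp.mpr (mul_le_mul_of_nonneg_left (abs_le.mp (hlam j)).2 hTp)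
    calc (inner ℂ (Dvec (fun j => Real.exp (T * p * lam j)) w) u).re
        ≤ ‖Dvec (fun j => Real.exp (T * p * lam j)) w‖ * ‖u‖ := by
          have := re_inner_le_norm (𝕜 := ℂ) (Dvec (fun j => Real.exp (T * p * lam j)) w) u
          simpa using this
      _ ≤ (Real.exp (T * p * c) * ‖w‖) * ‖u‖ :=
          mul_le_mul_of_nonneg_right (Dvec_norm_le (Real.exp_pos _).le hE w) (norm_nonneg u)
      _ ≤ (Real.exp (T * p * c) * c) * ‖u‖ := by
          apply mul_le_mul_of_nonneg_right _ (norm_nonneg u)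
          exact mul_le_mul_of_nonneg_left hw (Real.exp_pos _).le
      _ = c * Real.exp (T * p * c) * ‖u‖ := by ring

private lemma ghat_image_eq {d N : ℕ} (x : Fin N → EuclideanSpace ℂ (Fin d)) (c T p γ : ℝ)
    (s : Fin N → ℝ) :
    (fun h : EuclideanSpace ℂ (Fin d) → ℝ => ∑ i, s i * h (x i)) '' Ghat d c T p γ
      = (fun r => Real.exp (-(p * (1 - p) * γ ^ 2 * T / 2)) * r) ''
          ((fun h : EuclideanSpace ℂ (Fin d) → ℝ => ∑ i, s i * h (x i)) '' Fhat d c T p) := by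
  ext y
  constructor
  · rintro ⟨h, ⟨w, hw, lam, hlam, rfl⟩, rfl⟩
    refine ⟨∑ i, s i * (fun v => (∑ j, conj (w j) * (Real.exp (T * p * lam j) : ℂ) * v j).re)
      (x i), ⟨_, ⟨w, hw, lam, hlam, rfl⟩, rfl⟩, ?_⟩
    beta_reduce
    rw [Finset.mul_sum]
    exact (Finset.sum_congr rfl fun i _ => by ring).symm
  · rintro ⟨r, ⟨h, ⟨w, hw, lam, hlam, rfl⟩, rfl⟩, rfl⟩
    refine ⟨_, ⟨w, hw, lam, hlam, rfl⟩, ?_⟩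
    beta_reduce
    rw [Finset.mul_sum]
    exact Finset.sum_congr rfl fun i _ => by ring

/-- Theorem 3 of the paper in reduced closed form: the Rademacher complexity of the
stochastically perturbed class `Ĝ` is the damping factor `exp(−p(1−p)γ²T/2)` times that of
the deterministic class `F̂`, hence strictly smaller whenever `E_σ[‖∑ σᵢ xᵢ‖₂] > 0`. -/
theorem radComplexity_Ghat_lt_Fhat (d N : ℕ) (hN : 0 < N)
    (x : Fin N → EuclideanSpace ℂ (Fin d)) (c T γ p : ℝ)
    (hc : 0 < c) (hT : 0 < T) (hγ : 0 < γ) (hp : 0 < p) (hp1 : p < 1) :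
    radComplexity N (Fhat d c T p) x
        = c / N * Real.exp (c * T * p) *
            ((∑ b : Fin N → Bool, ‖∑ i, rsign (b i) • x i‖) / 2 ^ N) ∧
    radComplexity N (Ghat d c T p γ) x
        = Real.exp (-(p * (1 - p) * γ ^ 2 * T / 2)) * radComplexity N (Fhat d c T p) x ∧
    ((∑ b : Fin N → Bool, ‖∑ i, rsign (b i) • x i‖) / 2 ^ N > 0 →
      radComplexity N (Ghat d c T p γ) x < radComplexity N (Fhat d c T p) x) := by
  have hTp : 0 ≤ T * p := (mul_pos hT hp).le
  set K := Real.exp (-(p * (1 - p) * γ ^ 2 * T / 2)) with hK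
  have hK0 : 0 < K := Real.exp_pos _
  have hF : ∀ b : Fin N → Bool,
      sSup ((fun h : EuclideanSpace ℂ (Fin d) → ℝ => ∑ i, rsign (b i) * h (x i)) ''
        Fhat d c T p) = c * Real.exp (T * p * c) * ‖∑ i, rsign (b i) • x i‖ :=
    fun b => (fhat_isGreatest x hc hTp (fun i => rsign (b i))).csSup_eq
  have hG : ∀ b : Fin N → Bool,
      sSup ((fun h : EuclideanSpace ℂ (Fin d) → ℝ => ∑ i, rsign (b i) * h (x i)) ''
        Ghat d c T p γ) = K * (c * Real.exp (T * p * c) * ‖∑ i, rsign (b i) • x i‖) := by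
    intro b
    rw [ghat_image_eq x c T p γ (fun i => rsign (b i))]
    have hg := fhat_isGreatest x hc hTp (fun i => rsign (b i))
    have : IsGreatest ((fun r => K * r) ''
        ((fun h : EuclideanSpace ℂ (Fin d) → ℝ => ∑ i, rsign (b i) * h (x i)) '' Fhat d c T p))
        (K * (c * Real.exp (T * p * c) * ‖∑ i, rsign (b i) • x i‖)) := by
      constructor
      · exact ⟨_, hg.1, rfl⟩
      · rintro y ⟨r, hr, rfl⟩
        exact mul_le_mul_of_nonneg_left (hg.2 hr) hK0.le
    exact this.csSup_eq
  have hRF : radComplexity N (Fhat d c T p) x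
      = c / N * Real.exp (c * T * p) *
          ((∑ b : Fin N → Bool, ‖∑ i, rsign (b i) • x i‖) / 2 ^ N) := by
    rw [radComplexity]
    rw [Finset.sum_congr rfl fun b _ => hF b, ← Finset.mul_sum,
      show T * p * c = c * T * p by ring]
    ring
  have hRG : radComplexity N (Ghat d c T p γ) x
      = K * radComplexity N (Fhat d c T p) x := by
    rw [radComplexity, radComplexity]
    rw [Finset.sum_congr rfl fun b _ => hG b, Finset.sum_congr rfl fun b _ => hF b,
      ← Finset.mul_sum]
    ring
  refine ⟨hRF, hRG, fun hpos => ?_⟩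
  have hRFpos : 0 < radComplexity N (Fhat d c T p) x := by
    rw [hRF]
    have hN' : (0 : ℝ) < N := Nat.cast_pos.mpr hN
    positivity
  rw [hRG]
  have hK1 : K < 1 := by
    rw [hK]
    have h1p : 0 < 1 - p := by linarith
    have : -(p * (1 - p) * γ ^ 2 * T / 2) < 0 := by
      have : 0 < p * (1 - p) * γ ^ 2 * T / 2 := by positivity
      linarith
    calc Real.exp (-(p * (1 - p) * γ ^ 2 * T / 2)) < Real.exp 0 := Real.exp_lt_exp.mpr this
      _ = 1 := Real.exp_zero
  exact mul_lt_of_lt_one_left hRFpos hK1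
end
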